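/- Let ξ₁ ∈ S₃ and ξ₂ ∈ S₁ be complex numbers, and let t ∈ [−1,1] be real. Then there exists k ∈ {−1, 0, 1} such that | |ξ₁−1|² + |ξ₂−i|² + i(t + 2k + 2·Im ξ₁ − 2·Re ξ₂) | ≤ 2. Hence the region Σ₇ is covered by the closed regions bounded by the Heisenberg sphere of radius √2 centered at ((1,i)ᵀ,0) together with its vertical translates by ±2. -/

import Mathlib

open Complex

/-- The closed triangle with vertices `i, i/2, (1+i)/2`. -/
def triS₁ : Set ℂ := {z : ℂ | 0 ≤ z.re ∧ 1/2 ≤ z.im ∧ z.re + z.im ≤ 1}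

/-- The closed triangle with vertices `0, 1, (1+i)/2`. -/
def triS₃ : Set ℂ := {z : ℂ | 0 ≤ z.im ∧ z.im ≤ z.re ∧ z.re + z.im ≤ 1}

/-- The region `Σ₇` is covered by the closed regions bounded by the Heisenberg
sphere of radius `√2` centered at `((1,i)ᵀ,0)` together with its vertical
translates by `±2`. -/
theorem sigma_seven_covered
    (ξ₁ ξ₂ : ℂ) (hξ₁ : ξ₁ ∈ triS₃) (hξ₂ : ξ₂ ∈ triS₁)
    (t : ℝ) (ht : -1 ≤ t ∧ t ≤ 1) :
    ∃ k : ℤ, (k = -1 ∨ k = 0 ∨ k = 1) ∧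
      ‖(‖ξ₁ - 1‖ : ℂ) ^ 2 +
        (‖ξ₂ - Complex.I‖ : ℂ) ^ 2 +
        Complex.I * ((t + 2 * k + 2 * ξ₁.im - 2 * ξ₂.re : ℝ) : ℂ)‖ ≤ 2 := by
  obtain ⟨h1, h2, h3⟩ := hξ₁
  obtain ⟨g1, g2, g3⟩ := hξ₂
  obtain ⟨ht1, ht2⟩ := ht
  set a : ℝ := ‖ξ₁ - 1‖ with ha
  set b : ℝ := ‖ξ₂ - Complex.I‖ with hb
  have ha2 : a ^ 2 = (ξ₁.re - 1) ^ 2 + ξ₁.im ^ 2 := by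
    rw [ha, Complex.sq_norm, Complex.normSq_apply]
    simp [Complex.sub_re, Complex.sub_im]; ring
  have hb2 : b ^ 2 = ξ₂.re ^ 2 + (ξ₂.im - 1) ^ 2 := by
    rw [hb, Complex.sq_norm, Complex.normSq_apply]
    simp [Complex.sub_re, Complex.sub_im]; ring
  have haB : a ^ 2 ≤ 1 := by rw [ha2]; nlinarith
  have hbB : b ^ 2 ≤ 1 / 2 := by rw [hb2]; nlinarith
  have ha0 : 0 ≤ a ^ 2 := sq_nonneg a
  have hb0 : 0 ≤ b ^ 2 := sq_nonneg b
  set S : ℝ := t + 2 * ξ₁.im - 2 * ξ₂.re with hS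
  have key : ∀ k : ℤ, |t + 2 * k + 2 * ξ₁.im - 2 * ξ₂.re| ≤ 1 →
      ‖(a : ℂ) ^ 2 + (b : ℂ) ^ 2 +
        Complex.I * ((t + 2 * k + 2 * ξ₁.im - 2 * ξ₂.re : ℝ) : ℂ)‖ ≤ 2 := by
    intro k hk
    set T : ℝ := t + 2 * k + 2 * ξ₁.im - 2 * ξ₂.re with hT
    have hz : (a : ℂ) ^ 2 + (b : ℂ) ^ 2 + Complex.I * (T : ℂ)
        = Complex.mk (a ^ 2 + b ^ 2) T := by
      apply Complex.ext <;> simp [← Complex.ofReal_pow]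
    rw [hz, Complex.norm_def, Complex.normSq_mk]
    have hT2 : T ^ 2 ≤ 1 := by nlinarith [abs_nonneg T, _root_.sq_abs T]
    have h4 : (a ^ 2 + b ^ 2) * (a ^ 2 + b ^ 2) + T * T ≤ 4 := by nlinarith
    calc Real.sqrt ((a ^ 2 + b ^ 2) * (a ^ 2 + b ^ 2) + T * T)
        ≤ Real.sqrt 4 := Real.sqrt_le_sqrt h4
      _ = 2 := by rw [show (4:ℝ) = 2 ^ 2 by norm_num, Real.sqrt_sq (by norm_num)]
  have hIm1 : ξ₁.im ≤ 1 / 2 := by linarith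
  have hRe2 : ξ₂.re ≤ 1 / 2 := by linarith
  rcases le_or_gt S (-1) with hc | hc
  · refine ⟨1, Or.inr (Or.inr rfl), key 1 ?_⟩
    rw [abs_le]; push_cast
    constructor <;> [linarith; nlinarith]
  · rcases le_or_gt 1 S with hc2 | hc2
    · refine ⟨-1, Or.inl rfl, key (-1) ?_⟩
      rw [abs_le]; push_cast
      constructor <;> [nlinarith; linarith]
    · refine ⟨0, Or.inr (Or.inl rfl), key 0 ?_⟩
      rw [abs_le]; push_cast
      constructor <;> linarith
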